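/- For every α ∈ (0,1) and every x > 0, the profile function Φ satisfies the integral identity Φ(x) = 1 − (1/(Γ(α)(1+α))) ∫_0^x s·Φ(s)·(x−s)^{α−1} ds, and consequently Φ(x) ≥ 0 and ∫_0^x s·Φ(s)·(x−s)^{α−1} ds ≤ Γ(α)(1+α). -/

import Mathlib

open Real MeasureTheory Set Filter Topology

noncomputable def bCoef (α : ℝ) (n : ℕ) : ℝ :=
  ∏ i ∈ Finset.range n, Real.Gamma (α * i + i + 2) / Real.Gamma (α * (i + 1) + i + 2)

/-- The profile function `Φ(x) = ∑ bₙ (−x^{1+α}/(1+α))ⁿ`. -/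
noncomputable def Phi (α : ℝ) (x : ℝ) : ℝ :=
  ∑' n : ℕ, bCoef α n * (-(x ^ (1 + α)) / (1 + α)) ^ n

/-- The Caputo fractional derivative of order `α`. -/
noncomputable def caputo (α : ℝ) (f : ℝ → ℝ) (x : ℝ) : ℝ :=
  (1 / Real.Gamma (1 - α)) * ∫ τ in (0:ℝ)..x, deriv f τ * (x - τ) ^ (-α)

/-- The normalizing constant `a₀` with `1/a₀ = 2∫₀^∞ Φ`. -/
noncomputable def a0 (α : ℝ) : ℝ := (2 * ∫ x in Set.Ioi (0:ℝ), Phi α x)⁻¹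

/-- The fundamental solution `𝔈_t(x) = a₀ t^{−1/(1+α)} Φ(|x| t^{−1/(1+α)})`. -/
noncomputable def fundSol (α t x : ℝ) : ℝ :=
  a0 α * t ^ (-1/(1+α)) * Phi α (|x| * t ^ (-1/(1+α)))

noncomputable def C1 (α : ℝ) : ℝ :=
  α * (2:ℝ) ^ (1+α) * max (∫ u in (1/2:ℝ)..1, u ^ (-(1+α)) * (1-u) ^ (α-1)) 2

noncomputable def C2 (α : ℝ) : ℝ := 2 * a0 α * C1 α

lemma bCoef_pos {α : ℝ} (hα : 0 < α) (n : ℕ) : 0 < bCoef α n := by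
  apply Finset.prod_pos
  intro i _
  apply div_pos <;> apply Real.Gamma_pos_of_pos <;> positivity

lemma bCoef_succ (α : ℝ) (n : ℕ) :
    bCoef α (n + 1) = bCoef α n *
      (Real.Gamma (α * n + n + 2) / Real.Gamma (α * (n + 1) + n + 2)) := by
  rw [bCoef, Finset.prod_range_succ]; rfl

/-- Log-convexity bound: `Γ(y) ≤ Γ(y+α) * (y-1+α)^(-α)` for `y ≥ 2`, `0 < α < 1`. -/
lemma Gamma_ratio_le {α y : ℝ} (hα : α ∈ Set.Ioo (0:ℝ) 1) (hy : 2 ≤ y) :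
    Real.Gamma y ≤ Real.Gamma (y + α) * (y - 1 + α) ^ (-α) := by
  obtain ⟨hα0, hα1⟩ := hα
  have h1 : (0:ℝ) < y - 1 + α := by linarith
  have h2 : (0:ℝ) < y + α := by linarith
  have hG1 : 0 < Real.Gamma (y - 1 + α) := Real.Gamma_pos_of_pos h1
  have hG2 : 0 < Real.Gamma (y + α) := Real.Gamma_pos_of_pos h2
  -- y = (1-α)•(y+α) + α•(y-1+α)
  have key := Real.convexOn_log_Gamma.2 (Set.mem_Ioi.2 h2) (Set.mem_Ioi.2 h1)
    (by linarith : (0:ℝ) ≤ 1 - α) hα0.le (by ring)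
  have hcomb : (1 - α) • (y + α) + α • (y - 1 + α) = y := by simp [smul_eq_mul]; ring
  rw [hcomb] at key
  simp only [Function.comp_apply, smul_eq_mul] at key
  -- exponentiate
  have hGy : 0 < Real.Gamma y := Real.Gamma_pos_of_pos (by linarith)
  have := Real.exp_le_exp.2 key
  rw [Real.exp_log hGy, Real.exp_add, mul_comm (1 - α), mul_comm α, ← Real.rpow_def_of_pos hG2, ← Real.rpow_def_of_pos hG1] at this
  -- Γ(y+α) = (y-1+α) * Γ(y-1+α)
  have hrec : Real.Gamma (y + α) = (y - 1 + α) * Real.Gamma (y - 1 + α) := by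
    have := Real.Gamma_add_one (s := y - 1 + α) h1.ne'
    rw [show y - 1 + α + 1 = y + α by ring] at this
    linarith [this]
  have hG1eq : Real.Gamma (y - 1 + α) = Real.Gamma (y + α) / (y - 1 + α) := by
    rw [hrec]; field_simp
  calc Real.Gamma y ≤ Real.Gamma (y + α) ^ (1 - α) * Real.Gamma (y - 1 + α) ^ α := this
    _ = Real.Gamma (y + α) ^ (1 - α) * (Real.Gamma (y + α) ^ α * (y - 1 + α) ^ (-α)) := by
        rw [hG1eq, Real.div_rpow hG2.le h1.le, Real.rpow_neg h1.le, div_eq_mul_inv]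
    _ = Real.Gamma (y + α) ^ ((1 - α) + α) * (y - 1 + α) ^ (-α) := by
        rw [Real.rpow_add hG2]; ring
    _ = Real.Gamma (y + α) * (y - 1 + α) ^ (-α) := by norm_num

lemma bCoef_ratio_le {α : ℝ} (hα : α ∈ Set.Ioo (0:ℝ) 1) (n : ℕ) :
    Real.Gamma (α * n + n + 2) / Real.Gamma (α * (n + 1) + n + 2) ≤ ((n:ℝ) + 1) ^ (-α) := by
  obtain ⟨hα0, hα1⟩ := hα
  set y : ℝ := α * n + n + 2 with hy
  have hy2 : 2 ≤ y := by have : (0:ℝ) ≤ α * n := by positivity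
                         have : (0:ℝ) ≤ (n:ℝ) := n.cast_nonneg
                         simp only [hy]; linarith
  have hkey := Gamma_ratio_le ⟨hα0, hα1⟩ hy2
  have hG2 : 0 < Real.Gamma (y + α) := Real.Gamma_pos_of_pos (by linarith)
  have heq : α * (n + 1) + n + 2 = y + α := by simp only [hy]; push_cast; ring
  rw [heq]
  rw [div_le_iff₀ hG2]
  calc Real.Gamma y ≤ Real.Gamma (y + α) * (y - 1 + α) ^ (-α) := hkey
    _ ≤ Real.Gamma (y + α) * ((n:ℝ) + 1) ^ (-α) := by
        apply mul_le_mul_of_nonneg_left _ hG2.le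
        apply Real.rpow_le_rpow_of_nonpos (by positivity)
        · have : (0:ℝ) ≤ α * n := by positivity
          have : (0:ℝ) ≤ α := hα0.le
          simp only [hy]; linarith
        · linarith
    _ = ((n:ℝ) + 1) ^ (-α) * Real.Gamma (y + α) := by ring

lemma summable_bCoef {α : ℝ} (hα : α ∈ Set.Ioo (0:ℝ) 1) (r : ℝ) :
    Summable (fun n => bCoef α n * r ^ n) := by
  obtain ⟨hα0, hα1⟩ := hα
  apply summable_of_ratio_norm_eventually_le (r := 1/2) (by norm_num)
  have htend : Filter.Tendsto (fun n : ℕ => ((n:ℝ) + 1) ^ (-α) * |r|) Filter.atTop (𝓝 0) := by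
    have h1 : Filter.Tendsto (fun n : ℕ => ((n:ℝ) + 1)) Filter.atTop Filter.atTop :=
      tendsto_atTop_add_const_right _ 1 tendsto_natCast_atTop_atTop
    have := (tendsto_rpow_neg_atTop hα0).comp h1
    simpa using this.mul_const |r|
  have hev : ∀ᶠ n : ℕ in Filter.atTop, ((n:ℝ) + 1) ^ (-α) * |r| ≤ 1/2 :=
    htend.eventually_le_const (by norm_num)
  filter_upwards [hev] with n hn
  have hbpos := bCoef_pos hα0 n
  have hbpos' := bCoef_pos hα0 (n+1)
  rw [norm_mul, norm_mul, norm_pow, norm_pow, Real.norm_eq_abs, Real.norm_eq_abs,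
    Real.norm_eq_abs, abs_of_pos hbpos, abs_of_pos hbpos', pow_succ]
  calc bCoef α (n+1) * (|r|^n * |r|)
      = (bCoef α n * |r|^n) * ((Real.Gamma (α * n + n + 2) / Real.Gamma (α * (n + 1) + n + 2)) * |r|) := by
        rw [bCoef_succ]; ring
    _ ≤ (bCoef α n * |r|^n) * (((n:ℝ) + 1) ^ (-α) * |r|) := by
        apply mul_le_mul_of_nonneg_left _ (by positivity)
        exact mul_le_mul_of_nonneg_right (bCoef_ratio_le ⟨hα0, hα1⟩ n) (abs_nonneg r)
    _ ≤ (bCoef α n * |r|^n) * (1/2) := mul_le_mul_of_nonneg_left hn (by positivity)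
    _ = 1/2 * (bCoef α n * |r|^n) := by ring

lemma real_beta_integral {p q x : ℝ} (hp : 0 < p) (hq : 0 < q) (hx : 0 < x) :
    ∫ s in (0:ℝ)..x, s ^ (p - 1) * (x - s) ^ (q - 1) =
      x ^ (p + q - 1) * (Real.Gamma p * Real.Gamma q / Real.Gamma (p + q)) := by
  have hg := Complex.Gamma_mul_Gamma_eq_betaIntegral (s := (p:ℂ)) (t := (q:ℂ))
    (by simpa using hp) (by simpa using hq)
  have hscale := Complex.betaIntegral_scaled (p:ℂ) (q:ℂ) hx
  have hGpq : Complex.Gamma ((p:ℂ) + q) ≠ 0 := by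
    rw [show ((p:ℂ) + q) = ((p + q : ℝ) : ℂ) by push_cast; ring, Complex.Gamma_ofReal]
    exact_mod_cast (Real.Gamma_pos_of_pos (by linarith)).ne'
  have hbeta : Complex.betaIntegral p q =
      ((Real.Gamma p * Real.Gamma q / Real.Gamma (p + q) : ℝ) : ℂ) := by
    have : Complex.betaIntegral p q = Complex.Gamma p * Complex.Gamma q / Complex.Gamma ((p:ℂ) + q) := by
      field_simp [hg]
      rw [hg]; ring
    rw [this, ← Complex.ofReal_add, Complex.Gamma_ofReal, Complex.Gamma_ofReal, Complex.Gamma_ofReal]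
    push_cast; ring
  have hconv : (∫ s in (0:ℝ)..x, (s:ℂ) ^ ((p:ℂ) - 1) * ((x:ℂ) - s) ^ ((q:ℂ) - 1)) =
      ((∫ s in (0:ℝ)..x, s ^ (p - 1) * (x - s) ^ (q - 1) : ℝ) : ℂ) := by
    rw [← intervalIntegral.integral_ofReal]
    rw [intervalIntegral.integral_of_le hx.le, intervalIntegral.integral_of_le hx.le]
    apply setIntegral_congr_fun measurableSet_Ioc
    intro s hs
    have hsub : (0:ℝ) ≤ x - s := by linarith [hs.2]
    simp only
    push_cast [Complex.ofReal_cpow hs.1.le, Complex.ofReal_cpow hsub]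
    ring
  have hxpow : ((x:ℂ)) ^ ((p:ℂ) + q - 1) = ((x ^ (p + q - 1) : ℝ) : ℂ) := by
    push_cast [Complex.ofReal_cpow hx.le]
    ring_nf
  rw [hconv, hxpow, hbeta] at hscale
  exact_mod_cast hscale

lemma summable_Phi {α : ℝ} (hα : α ∈ Set.Ioo (0:ℝ) 1) (x : ℝ) :
    Summable (fun n => bCoef α n * (-(x ^ (1 + α)) / (1 + α)) ^ n) :=
  summable_bCoef hα _

lemma Phi_zero {α : ℝ} (hα : α ∈ Set.Ioo (0:ℝ) 1) : Phi α 0 = 1 := by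
  have h0 : (0:ℝ) ^ (1 + α) = 0 := Real.zero_rpow (by nlinarith [hα.1, hα.2])
  rw [Phi]
  rw [tsum_eq_single 0 (by intro n hn; simp [h0, zero_pow hn])]
  simp [bCoef]

lemma integrable_mul_rpow {α x a b : ℝ} (hα : α ∈ Set.Ioo (0:ℝ) 1) {ψ : ℝ → ℝ}
    (hψ : ContinuousOn ψ (Set.uIcc a b)) :
    IntervalIntegrable (fun s => ψ s * (x - s) ^ (α - 1)) volume a b := by
  have h0 : IntervalIntegrable (fun u : ℝ => u ^ (α - 1)) volume (x - b) (x - a) :=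
    intervalIntegral.intervalIntegrable_rpow' (by linarith [hα.1])
  have h1 := h0.comp_sub_left x
  simp only [sub_sub_cancel] at h1
  exact (h1.continuousOn_mul (by rwa [Set.uIcc_comm] at hψ)).symm

lemma continuous_Phi_aux {α : ℝ} (hα : α ∈ Set.Ioo (0:ℝ) 1) {M : ℝ} (hM : 0 ≤ M) :
    ContinuousOn (Phi α) (Set.Icc 0 M) := by
  obtain ⟨hα0, hα1⟩ := hα
  have hc : (0:ℝ) < 1 + α := by linarith
  apply continuousOn_tsum (u := fun n => bCoef α n * (M ^ (1 + α) / (1 + α)) ^ n)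
  · intro n
    apply Continuous.continuousOn
    have : Continuous fun x : ℝ => x ^ (1 + α) := by
      rw [continuous_iff_continuousAt]
      intro x
      exact Real.continuousAt_rpow_const x _ (Or.inr hc.le)
    continuity
  · exact summable_bCoef ⟨hα0, hα1⟩ _
  · intro n x hx
    have hx0 : (0:ℝ) ≤ x := hx.1
    have hxM : x ^ (1 + α) ≤ M ^ (1 + α) := Real.rpow_le_rpow hx0 hx.2 hc.le
    have hxp : (0:ℝ) ≤ x ^ (1 + α) := Real.rpow_nonneg hx0 _
    rw [norm_mul, norm_pow, Real.norm_eq_abs, Real.norm_eq_abs,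
      abs_of_pos (bCoef_pos hα0 n)]
    apply mul_le_mul_of_nonneg_left _ (bCoef_pos hα0 n).le
    apply pow_le_pow_left₀ (abs_nonneg _)
    rw [abs_div, abs_neg, abs_of_nonneg hxp, abs_of_pos hc]
    gcongr

lemma Phi_identity {α : ℝ} (hα : α ∈ Set.Ioo (0:ℝ) 1) {x : ℝ} (hx : 0 < x) :
    Phi α x = 1 - (1 / (Real.Gamma α * (1 + α))) *
      ∫ s in (0:ℝ)..x, s * Phi α s * (x - s) ^ (α - 1) := by
  obtain ⟨hα0, hα1⟩ := hα
  have hc : (0:ℝ) < 1 + α := by linarith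
  have hΓ : 0 < Real.Gamma α := Real.Gamma_pos_of_pos hα0
  set c : ℝ := 1 + α with hcdef
  have hcont_pow : Continuous fun s : ℝ => s ^ c := by
    rw [continuous_iff_continuousAt]
    intro s
    exact Real.continuousAt_rpow_const s _ (Or.inr hc.le)
  set F : ℕ → ℝ → ℝ :=
    fun n s => bCoef α n * (-(s ^ c) / c) ^ n * (s * (x - s) ^ (α - 1)) with hF
  -- Beta integral values
  have hbeta : ∀ n : ℕ, (∫ s in (0:ℝ)..x, s ^ (c * n + 1) * (x - s) ^ (α - 1))
      = x ^ (c * n + 1 + α) *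
        (Real.Gamma (c * n + 2) * Real.Gamma α / Real.Gamma (c * n + 2 + α)) := by
    intro n
    have h := real_beta_integral (p := c * n + 2) (q := α) (by positivity) hα0 hx
    rw [show c * (n:ℝ) + 2 - 1 = c * n + 1 by ring,
      show c * (n:ℝ) + 2 + α - 1 = c * n + 1 + α by ring] at h
    exact h
  -- each interval integral of F n
  have hFval : ∀ n : ℕ, (∫ s in (0:ℝ)..x, F n s)
      = -(Real.Gamma α * c) * (bCoef α (n + 1) * (-(x ^ c) / c) ^ (n + 1)) := by
    intro n
    have hcong : ∀ s ∈ Set.Ioc (0:ℝ) x, F n s =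
        (bCoef α n * (-1 / c) ^ n) * (s ^ (c * n + 1) * (x - s) ^ (α - 1)) := by
      intro s hs
      have hs0 : 0 < s := hs.1
      have h1 : (-(s ^ c) / c) ^ n = (-1 / c) ^ n * (s ^ (c : ℝ)) ^ n := by
        rw [← mul_pow]; congr 1; ring
      have h2 : (s ^ (c:ℝ)) ^ n = s ^ (c * (n:ℝ)) := by
        rw [← Real.rpow_natCast (s ^ (c:ℝ)) n, ← Real.rpow_mul hs0.le]
      have h3 : s ^ (c * (n:ℝ) + 1) = s ^ (c * (n:ℝ)) * s := by
        rw [Real.rpow_add_one hs0.ne']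
      simp only [hF, h1, h2, h3]
      ring
    have hsucc : bCoef α (n + 1) =
        bCoef α n * (Real.Gamma (c * n + 2) / Real.Gamma (c * n + 2 + α)) := by
      rw [bCoef_succ]
      congr 2
      · push_cast; simp only [hcdef]; ring
      · push_cast; simp only [hcdef]; ring
    have hxpow : x ^ (c * (n:ℝ) + 1 + α) = (x ^ (c:ℝ)) ^ (n + 1) := by
      rw [show c * (n:ℝ) + 1 + α = c * ((n:ℝ) + 1) by simp only [hcdef]; ring,
        Real.rpow_mul hx.le, show ((n:ℝ) + 1) = ((n + 1 : ℕ) : ℝ) by push_cast; ring,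
        Real.rpow_natCast]
    have hGpos : 0 < Real.Gamma (c * n + 2 + α) := Real.Gamma_pos_of_pos (by positivity)
    calc (∫ s in (0:ℝ)..x, F n s)
        = ∫ s in (0:ℝ)..x, (bCoef α n * (-1 / c) ^ n) * (s ^ (c * n + 1) * (x - s) ^ (α - 1)) := by
          rw [intervalIntegral.integral_of_le hx.le, intervalIntegral.integral_of_le hx.le]
          exact setIntegral_congr_fun measurableSet_Ioc hcong
      _ = (bCoef α n * (-1 / c) ^ n) * ∫ s in (0:ℝ)..x, s ^ (c * n + 1) * (x - s) ^ (α - 1) :=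
          intervalIntegral.integral_const_mul _ _
      _ = (bCoef α n * (-1 / c) ^ n) * (x ^ (c * n + 1 + α) *
            (Real.Gamma (c * n + 2) * Real.Gamma α / Real.Gamma (c * n + 2 + α))) := by
          rw [hbeta n]
      _ = -(Real.Gamma α * c) * (bCoef α (n + 1) * (-(x ^ c) / c) ^ (n + 1)) := by
          rw [hsucc, hxpow, show (-(x ^ (c:ℝ)) / c) ^ (n+1) = (-1 / c) ^ (n+1) * (x ^ (c:ℝ)) ^ (n+1) by
            rw [← mul_pow]; congr 1; ring]
          rw [pow_succ (-1/c) n]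
          field_simp
  -- integrability of the base function
  have hJint : IntervalIntegrable (fun s => s * (x - s) ^ (α - 1)) volume 0 x :=
    integrable_mul_rpow ⟨hα0, hα1⟩ (continuous_id.continuousOn)
  have hJint' : IntegrableOn (fun s => s * (x - s) ^ (α - 1)) (Set.Ioc 0 x) volume :=
    (intervalIntegrable_iff_integrableOn_Ioc_of_le hx.le).mp hJint
  set J : ℝ := ∫ s in Set.Ioc (0:ℝ) x, s * (x - s) ^ (α - 1) with hJ
  have hJnn : 0 ≤ J := by
    apply setIntegral_nonneg measurableSet_Ioc
    intro s hs
    have h1 : (0:ℝ) ≤ x - s := by linarith [hs.2]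
    exact mul_nonneg hs.1.le (Real.rpow_nonneg h1 _)
  set ρ : ℝ := x ^ (c:ℝ) / c with hρ
  have hρnn : 0 ≤ ρ := by positivity
  -- interchange sum and integral
  have hmeas : ∀ n, AEStronglyMeasurable (F n) (volume.restrict (Set.Ioc 0 x)) := by
    intro n
    have h1 : Measurable (F n) := by
      rw [hF]; fun_prop
    exact h1.aestronglyMeasurable
  have hbound : ∀ n, (∫⁻ s in Set.Ioc (0:ℝ) x, ‖F n s‖₊)
      ≤ ENNReal.ofReal (bCoef α n * ρ ^ n * J) := by
    intro n
    have hb := bCoef_pos hα0 n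
    have hle : ∀ s ∈ Set.Ioc (0:ℝ) x, ‖F n s‖ ≤ bCoef α n * ρ ^ n * (s * (x - s) ^ (α - 1)) := by
      intro s hs
      have hs0 : 0 < s := hs.1
      have hxs : (0:ℝ) ≤ x - s := by linarith [hs.2]
      have hsp : (0:ℝ) ≤ s ^ (c:ℝ) := Real.rpow_nonneg hs0.le _
      have hw : (0:ℝ) ≤ (x - s) ^ (α - 1) := Real.rpow_nonneg hxs _
      rw [hF]
      simp only [Real.norm_eq_abs]
      rw [abs_mul, abs_mul, abs_pow, abs_of_pos hb, abs_of_nonneg (by positivity : (0:ℝ) ≤ s * (x-s)^(α-1))]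
      apply mul_le_mul_of_nonneg_right _ (by positivity)
      apply mul_le_mul_of_nonneg_left _ hb.le
      apply pow_le_pow_left₀ (abs_nonneg _)
      rw [abs_div, abs_neg, abs_of_nonneg hsp, abs_of_pos hc]
      rw [hρ]
      gcongr
      exact hs.2
    calc (∫⁻ s in Set.Ioc (0:ℝ) x, ‖F n s‖₊)
        ≤ ∫⁻ s in Set.Ioc (0:ℝ) x, ENNReal.ofReal (bCoef α n * ρ ^ n * (s * (x - s) ^ (α - 1))) := by
          apply setLIntegral_mono' measurableSet_Ioc
          intro s hs
          rw [← ENNReal.ofReal_coe_nnreal, coe_nnnorm]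
          exact ENNReal.ofReal_le_ofReal (hle s hs)
      _ = ENNReal.ofReal (∫ s in Set.Ioc (0:ℝ) x, bCoef α n * ρ ^ n * (s * (x - s) ^ (α - 1))) := by
          rw [MeasureTheory.ofReal_integral_eq_lintegral_ofReal]
          · exact hJint'.const_mul _
          · filter_upwards [ae_restrict_mem measurableSet_Ioc] with s hs
            have h1 : (0:ℝ) ≤ x - s := by linarith [hs.2]
            have h2 := Real.rpow_nonneg h1 (α - 1)
            exact mul_nonneg (by positivity) (mul_nonneg hs.1.le h2)
      _ = ENNReal.ofReal (bCoef α n * ρ ^ n * J) := by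
          rw [MeasureTheory.integral_const_mul, hJ]
  -- summability of the bound
  have hsum2 : Summable (fun n => bCoef α n * ρ ^ n * J) :=
    (summable_bCoef ⟨hα0, hα1⟩ ρ).mul_right J
  have hne : (∑' n, ∫⁻ s in Set.Ioc (0:ℝ) x, ‖F n s‖₊) ≠ ⊤ := by
    have h1 : (∑' n, ENNReal.ofReal (bCoef α n * ρ ^ n * J)) ≠ ⊤ := by
      rw [← ENNReal.ofReal_tsum_of_nonneg (fun n => by
        have := bCoef_pos hα0 n; positivity) hsum2]
      exact ENNReal.ofReal_ne_top
    exact ne_top_of_le_ne_top h1 (ENNReal.tsum_le_tsum hbound)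
  have hptw : ∀ s ∈ Set.Ioc (0:ℝ) x, s * Phi α s * (x - s) ^ (α - 1) = ∑' n, F n s := by
    intro s hs
    calc s * Phi α s * (x - s) ^ (α - 1)
        = (∑' n, bCoef α n * (-(s ^ (1 + α)) / (1 + α)) ^ n) * (s * (x - s) ^ (α - 1)) := by
          rw [Phi]; ring
      _ = ∑' n, (bCoef α n * (-(s ^ (1 + α)) / (1 + α)) ^ n) * (s * (x - s) ^ (α - 1)) :=
          tsum_mul_right.symm
      _ = ∑' n, F n s := by rfl
  have hG : (∫ s in (0:ℝ)..x, s * Phi α s * (x - s) ^ (α - 1))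
      = -(Real.Gamma α * c) * (Phi α x - 1) := by
    rw [intervalIntegral.integral_of_le hx.le,
      setIntegral_congr_fun measurableSet_Ioc hptw,
      MeasureTheory.integral_tsum hmeas hne]
    have hIoc : ∀ n, (∫ s in Set.Ioc (0:ℝ) x, F n s)
        = -(Real.Gamma α * c) * (bCoef α (n + 1) * (-(x ^ c) / c) ^ (n + 1)) := by
      intro n
      rw [← intervalIntegral.integral_of_le hx.le]
      exact hFval n
    rw [tsum_congr hIoc, tsum_mul_left]
    congr 1
    have hT : Summable fun n => bCoef α n * (-(x ^ (c:ℝ)) / c) ^ n :=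
      summable_bCoef ⟨hα0, hα1⟩ _
    have h0 := hT.tsum_eq_zero_add
    have hPhiT : Phi α x = ∑' n, bCoef α n * (-(x ^ (c:ℝ)) / c) ^ n := rfl
    rw [hPhiT, h0]
    simp [bCoef]
  have hK : Real.Gamma α * c ≠ 0 := by positivity
  rw [hG]
  field_simp
  ring

set_option maxHeartbeats 2000000 in
lemma Phi_nonneg {α : ℝ} (hα : α ∈ Set.Ioo (0:ℝ) 1) {x : ℝ} (hx : 0 ≤ x) :
    0 ≤ Phi α x := by
  obtain ⟨hα0, hα1⟩ := hα
  by_contra hneg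
  push_neg at hneg
  have hΓ : 0 < Real.Gamma α := Real.Gamma_pos_of_pos hα0
  set K : ℝ := Real.Gamma α * (1 + α) with hK
  have hKpos : 0 < K := mul_pos hΓ (by linarith : (0:ℝ) < 1 + α)
  have hxpos : 0 < x := by
    rcases hx.eq_or_lt with h | h
    · exfalso; rw [← h, Phi_zero ⟨hα0, hα1⟩] at hneg; linarith
    · exact h
  have hcont := continuous_Phi_aux ⟨hα0, hα1⟩ hx
  -- first entry into negativity
  set S : Set ℝ := {s | s ∈ Set.Icc 0 x ∧ Phi α s < 0} with hS
  have hSne : S.Nonempty := ⟨x, ⟨hx, le_refl x⟩, hneg⟩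
  have hSbdd : BddBelow S := ⟨0, fun z hz => hz.1.1⟩
  set x₁ : ℝ := sInf S with hx₁
  have hx₁cl : x₁ ∈ Set.Icc 0 x ∧ Phi α x₁ ≤ 0 := by
    have hsub : S ⊆ Set.Icc 0 x ∩ Phi α ⁻¹' Set.Iic 0 :=
      fun z hz => ⟨hz.1, le_of_lt hz.2⟩
    have hclosed : IsClosed (Set.Icc 0 x ∩ Phi α ⁻¹' Set.Iic 0) :=
      hcont.preimage_isClosed_of_isClosed isClosed_Icc isClosed_Iic
    have := (closure_minimal hsub hclosed) (csInf_mem_closure hSne hSbdd)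
    exact ⟨this.1, this.2⟩
  have hx₁pos : 0 < x₁ := by
    rcases hx₁cl.1.1.eq_or_lt with h | h
    · exfalso
      have := hx₁cl.2
      rw [← h, Phi_zero ⟨hα0, hα1⟩] at this
      linarith
    · exact h
  have hx₁nonneg : ∀ y, 0 ≤ y → y < x₁ → 0 ≤ Phi α y := by
    intro y hy0 hylt
    by_contra h
    push_neg at h
    have hyS : y ∈ S := ⟨⟨hy0, by linarith [hx₁cl.1.2]⟩, h⟩
    exact absurd (csInf_le hSbdd hyS) (not_le.mpr hylt)
  -- choice of δ
  set ε₀ : ℝ := (α * K / (2 * (x₁ + 1))) ^ (1/α) with hε₀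
  have hε₀pos : 0 < ε₀ := Real.rpow_pos_of_pos (by positivity) _
  set δ : ℝ := min 1 ε₀ with hδ
  have hδpos : 0 < δ := lt_min one_pos hε₀pos
  have hδ1 : δ ≤ 1 := min_le_left _ _
  have hδkey : (x₁ + δ) * δ ^ (α:ℝ) ≤ α * K / 2 := by
    have h1 : δ ^ (α:ℝ) ≤ ε₀ ^ (α:ℝ) :=
      Real.rpow_le_rpow hδpos.le (min_le_right _ _) hα0.le
    have h2 : ε₀ ^ (α:ℝ) = α * K / (2 * (x₁ + 1)) := by
      rw [hε₀, ← Real.rpow_mul (by positivity), one_div, inv_mul_cancel₀ hα0.ne', Real.rpow_one]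
    have h3 : (0:ℝ) ≤ δ ^ (α:ℝ) := Real.rpow_nonneg hδpos.le _
    calc (x₁ + δ) * δ ^ (α:ℝ) ≤ (x₁ + 1) * (α * K / (2 * (x₁ + 1))) := by
          apply mul_le_mul (by linarith) (h1.trans_eq h2) h3 (by positivity)
      _ = α * K / 2 := by field_simp
  -- a negative point close to x₁
  obtain ⟨z, hzS, hzlt⟩ := exists_lt_of_csInf_lt hSne (lt_add_of_pos_right x₁ hδpos)
  have hx₁lez : x₁ ≤ z := csInf_le hSbdd hzS
  have hzpos : 0 < z := lt_of_lt_of_le hx₁pos hx₁lez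
  -- minimizer on [0, z]
  have hcontz : ContinuousOn (Phi α) (Set.Icc 0 z) := hcont.mono (Set.Icc_subset_Icc_right hzS.1.2)
  obtain ⟨x₀, hx₀mem, hx₀min⟩ := (isCompact_Icc (a := (0:ℝ)) (b := z)).exists_isMinOn
    ⟨0, le_refl 0, hzpos.le⟩ hcontz
  have hx₀min' : ∀ y ∈ Set.Icc 0 z, Phi α x₀ ≤ Phi α y := fun y hy => hx₀min hy
  have hx₀neg : Phi α x₀ < 0 := lt_of_le_of_lt (hx₀min' z ⟨hzpos.le, le_refl z⟩) hzS.2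
  have hx₁lex₀ : x₁ ≤ x₀ := by
    by_contra h
    push_neg at h
    exact absurd (hx₁nonneg x₀ hx₀mem.1 h) (not_le.mpr hx₀neg)
  have hx₀pos : 0 < x₀ := lt_of_lt_of_le hx₁pos hx₁lex₀
  have hx₀lez : x₀ ≤ z := hx₀mem.2
  -- last nonnegative point T before x₀
  have hcont₀ : ContinuousOn (Phi α) (Set.Icc 0 x₀) := hcontz.mono (Set.Icc_subset_Icc_right hx₀lez)
  set Z₂ : Set ℝ := Set.Icc 0 x₀ ∩ Phi α ⁻¹' Set.Ici 0 with hZ₂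
  have hZ₂closed : IsClosed Z₂ := hcont₀.preimage_isClosed_of_isClosed isClosed_Icc isClosed_Ici
  have hZ₂ne : Z₂.Nonempty := ⟨0, ⟨le_refl 0, hx₀pos.le⟩, by
    simp only [Set.mem_preimage, Set.mem_Ici, Phi_zero ⟨hα0, hα1⟩]; norm_num⟩
  have hZ₂bdd : BddAbove Z₂ := ⟨x₀, fun s hs => hs.1.2⟩
  set T : ℝ := sSup Z₂ with hT
  have hTZ₂ : T ∈ Z₂ := hZ₂closed.csSup_mem hZ₂ne hZ₂bdd
  have hTmem : T ∈ Set.Icc 0 x₀ := hTZ₂.1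
  have hTnn : 0 ≤ Phi α T := hTZ₂.2
  have hnegOn : ∀ s, T < s → s ≤ x₀ → Phi α s < 0 := by
    intro s h1 h2
    by_contra h
    push_neg at h
    have : s ∈ Z₂ := ⟨⟨by linarith [hTmem.1], h2⟩, h⟩
    exact absurd (le_csSup hZ₂bdd this) (not_le.mpr h1)
  have hTltx₀ : T < x₀ := by
    rcases hTmem.2.eq_or_lt with h | h
    · exfalso; rw [h] at hTnn; linarith
    · exact h
  have hx₁leT : x₁ ≤ T := by
    by_contra h
    push_neg at h
    have hy1 : T < (T + x₁)/2 := by linarith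
    have hy2 : (T + x₁)/2 < x₁ := by linarith
    have hneg' := hnegOn ((T + x₁)/2) hy1 (by linarith [hx₁lex₀])
    have hnn := hx₁nonneg ((T + x₁)/2) (by linarith [hTmem.1]) hy2
    linarith
  have hTpos : 0 < T := lt_of_lt_of_le hx₁pos hx₁leT
  -- identities
  have hidT := Phi_identity ⟨hα0, hα1⟩ hTpos
  have hidx₀ := Phi_identity ⟨hα0, hα1⟩ hx₀pos
  rw [← hK] at hidT hidx₀
  have hGT : (∫ s in (0:ℝ)..T, s * Phi α s * (T - s) ^ (α - 1)) ≤ K := by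
    have h3 : 1/K * (∫ s in (0:ℝ)..T, s * Phi α s * (T - s) ^ (α - 1)) = 1 - Phi α T := by
      linarith [hidT]
    calc (∫ s in (0:ℝ)..T, s * Phi α s * (T - s) ^ (α - 1))
        = K * (1/K * ∫ s in (0:ℝ)..T, s * Phi α s * (T - s) ^ (α - 1)) := by field_simp
      _ = K * (1 - Phi α T) := by rw [h3]
      _ ≤ K * 1 := mul_le_mul_of_nonneg_left (by linarith) hKpos.le
      _ = K := mul_one K
  -- notation
  set M : ℝ := -Phi α x₀ with hM
  have hMpos : 0 < M := by rw [hM]; linarith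
  -- integrability facts
  have hcont_sPhi : ContinuousOn (fun s => s * Phi α s) (Set.Icc 0 x₀) :=
    continuous_id.continuousOn.mul hcont₀
  have I1 : IntervalIntegrable (fun s => s * Phi α s * (x₀ - s) ^ (α - 1)) volume 0 x₀ :=
    integrable_mul_rpow ⟨hα0, hα1⟩ (by rwa [Set.uIcc_of_le hx₀pos.le])
  have I1a : IntervalIntegrable (fun s => s * Phi α s * (x₀ - s) ^ (α - 1)) volume 0 T :=
    I1.mono_set (by rw [Set.uIcc_of_le hx₀pos.le, Set.uIcc_of_le hTpos.le]
                    exact Set.Icc_subset_Icc_right hTltx₀.le)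
  have I1b : IntervalIntegrable (fun s => s * Phi α s * (x₀ - s) ^ (α - 1)) volume T x₀ :=
    I1.mono_set (by rw [Set.uIcc_of_le hx₀pos.le, Set.uIcc_of_le hTltx₀.le]
                    exact Set.Icc_subset_Icc_left hTmem.1)
  have hcontT : ContinuousOn (fun s => s * Phi α s) (Set.uIcc 0 T) := by
    rw [Set.uIcc_of_le hTpos.le]
    exact hcont_sPhi.mono (Set.Icc_subset_Icc_right hTltx₀.le)
  have I2 : IntervalIntegrable (fun s => s * Phi α s * (T - s) ^ (α - 1)) volume 0 T :=
    integrable_mul_rpow ⟨hα0, hα1⟩ hcontT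
  have hcontNeg : ContinuousOn (fun s => s * max (-Phi α s) 0) (Set.uIcc 0 T) := by
    rw [Set.uIcc_of_le hTpos.le]
    exact continuous_id.continuousOn.mul
      (((hcont₀.mono (Set.Icc_subset_Icc_right hTltx₀.le)).neg).sup continuousOn_const)
  have I3 : IntervalIntegrable (fun s => s * max (-Phi α s) 0 * (T - s) ^ (α - 1)) volume 0 T :=
    integrable_mul_rpow ⟨hα0, hα1⟩ hcontNeg
  have I3a : IntervalIntegrable (fun s => s * max (-Phi α s) 0 * (T - s) ^ (α - 1)) volume 0 x₁ :=
    I3.mono_set (by rw [Set.uIcc_of_le hTpos.le, Set.uIcc_of_le hx₁pos.le]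
                    exact Set.Icc_subset_Icc_right hx₁leT)
  have I3b : IntervalIntegrable (fun s => s * max (-Phi α s) 0 * (T - s) ^ (α - 1)) volume x₁ T :=
    I3.mono_set (by rw [Set.uIcc_of_le hTpos.le, Set.uIcc_of_le hx₁leT]
                    exact Set.Icc_subset_Icc_left hx₁pos.le)
  have I4 : IntervalIntegrable (fun s => (x₁ + δ) * M * (T - s) ^ (α - 1)) volume x₁ T :=
    integrable_mul_rpow ⟨hα0, hα1⟩ continuousOn_const
  -- split the identity at x₀
  have hsplit : (∫ s in (0:ℝ)..x₀, s * Phi α s * (x₀ - s) ^ (α - 1))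
      = (∫ s in (0:ℝ)..T, s * Phi α s * (x₀ - s) ^ (α - 1))
        + ∫ s in T..x₀, s * Phi α s * (x₀ - s) ^ (α - 1) :=
    (intervalIntegral.integral_add_adjacent_intervals I1a I1b).symm
  -- B ≤ 0
  have hB : (∫ s in T..x₀, s * Phi α s * (x₀ - s) ^ (α - 1)) ≤ 0 := by
    rw [intervalIntegral.integral_of_le hTltx₀.le, MeasureTheory.integral_Ioc_eq_integral_Ioo]
    apply setIntegral_nonpos measurableSet_Ioo
    intro s hs
    have hs0 : 0 < s := lt_trans hTpos hs.1
    have hφ : Phi α s < 0 := hnegOn s hs.1 hs.2.le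
    have hw : 0 ≤ (x₀ - s) ^ (α - 1) := Real.rpow_nonneg (by linarith [hs.2]) _
    have h1 : s * Phi α s ≤ 0 := mul_nonpos_iff.mpr (Or.inl ⟨hs0.le, hφ.le⟩)
    exact mul_nonpos_iff.mpr (Or.inr ⟨h1, hw⟩)
  -- A ≤ ∫ g1 + ∫ g2
  have hA : (∫ s in (0:ℝ)..T, s * Phi α s * (x₀ - s) ^ (α - 1))
      ≤ (∫ s in (0:ℝ)..T, s * Phi α s * (T - s) ^ (α - 1))
        + ∫ s in (0:ℝ)..T, s * max (-Phi α s) 0 * (T - s) ^ (α - 1) := by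
    rw [← intervalIntegral.integral_add I2 I3]
    rw [intervalIntegral.integral_of_le hTpos.le, intervalIntegral.integral_of_le hTpos.le,
      MeasureTheory.integral_Ioc_eq_integral_Ioo, MeasureTheory.integral_Ioc_eq_integral_Ioo]
    apply setIntegral_mono_on
    · exact (((intervalIntegrable_iff_integrableOn_Ioc_of_le hTpos.le).mp I1a)).mono_set
        Set.Ioo_subset_Ioc_self
    · exact (((intervalIntegrable_iff_integrableOn_Ioc_of_le hTpos.le).mp (I2.add I3))).mono_set
        Set.Ioo_subset_Ioc_self
    · exact measurableSet_Ioo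
    · intro s hs
      have hs0 : 0 < s := hs.1
      have hTs : 0 < T - s := by linarith [hs.2]
      have hx₀s : 0 < x₀ - s := by linarith [hTltx₀]
      have hwT : (0:ℝ) ≤ (T - s) ^ (α - 1) := Real.rpow_nonneg hTs.le _
      rcases le_or_gt 0 (Phi α s) with hφ | hφ
      · have hmax : max (-Phi α s) 0 = 0 := max_eq_right (by linarith)
        rw [hmax, mul_zero, zero_mul, add_zero]
        have hker : (x₀ - s) ^ (α - 1) ≤ (T - s) ^ (α - 1) :=
          Real.rpow_le_rpow_of_nonpos hTs (by linarith) (by linarith)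
        exact mul_le_mul_of_nonneg_left hker (mul_nonneg hs0.le hφ)
      · have hmax : max (-Phi α s) 0 = -Phi α s := max_eq_left (by linarith)
        rw [hmax]
        have hle0 : s * Phi α s * (x₀ - s) ^ (α - 1) ≤ 0 := by
          have h1 : s * Phi α s ≤ 0 := mul_nonpos_iff.mpr (Or.inl ⟨hs0.le, hφ.le⟩)
          exact mul_nonpos_iff.mpr (Or.inr ⟨h1, Real.rpow_nonneg hx₀s.le _⟩)
        have : s * Phi α s * (T - s) ^ (α - 1) + s * -Phi α s * (T - s) ^ (α - 1) = 0 := by ring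
        linarith
  -- ∫ g2 over [0, x₁] vanishes
  have hD0 : (∫ s in (0:ℝ)..x₁, s * max (-Phi α s) 0 * (T - s) ^ (α - 1)) = 0 := by
    rw [intervalIntegral.integral_of_le hx₁pos.le, MeasureTheory.integral_Ioc_eq_integral_Ioo]
    rw [setIntegral_congr_fun measurableSet_Ioo (g := fun _ => (0:ℝ)) ?_]
    · simp
    · intro s hs
      have hφ : 0 ≤ Phi α s := hx₁nonneg s hs.1.le hs.2
      simp [max_eq_right (by linarith : -Phi α s ≤ (0:ℝ))]
  have hDsplit : (∫ s in (0:ℝ)..T, s * max (-Phi α s) 0 * (T - s) ^ (α - 1))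
      = (∫ s in (0:ℝ)..x₁, s * max (-Phi α s) 0 * (T - s) ^ (α - 1))
        + ∫ s in x₁..T, s * max (-Phi α s) 0 * (T - s) ^ (α - 1) :=
    (intervalIntegral.integral_add_adjacent_intervals I3a I3b).symm
  -- bound ∫ g2 over [x₁, T]
  have hD2 : (∫ s in x₁..T, s * max (-Phi α s) 0 * (T - s) ^ (α - 1))
      ≤ ∫ s in x₁..T, (x₁ + δ) * M * (T - s) ^ (α - 1) := by
    rw [intervalIntegral.integral_of_le hx₁leT, intervalIntegral.integral_of_le hx₁leT,
      MeasureTheory.integral_Ioc_eq_integral_Ioo, MeasureTheory.integral_Ioc_eq_integral_Ioo]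
    apply setIntegral_mono_on
    · exact (((intervalIntegrable_iff_integrableOn_Ioc_of_le hx₁leT).mp I3b)).mono_set
        Set.Ioo_subset_Ioc_self
    · exact (((intervalIntegrable_iff_integrableOn_Ioc_of_le hx₁leT).mp I4)).mono_set
        Set.Ioo_subset_Ioc_self
    · exact measurableSet_Ioo
    · intro s hs
      have hs0 : 0 < s := lt_trans hx₁pos hs.1
      have hw : (0:ℝ) ≤ (T - s) ^ (α - 1) := Real.rpow_nonneg (by linarith [hs.2]) _
      have hsle : s ≤ x₁ + δ := by linarith [hs.2, hTmem.2, hx₀lez, hzlt]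
      have hmaxle : max (-Phi α s) 0 ≤ M := by
        apply max_le _ hMpos.le
        have := hx₀min' s ⟨hs0.le, by linarith [hs.2, hTmem.2, hx₀lez]⟩
        rw [hM]; linarith
      apply mul_le_mul_of_nonneg_right _ hw
      exact mul_le_mul hsle hmaxle (le_max_right _ _) (by positivity)
  have hrpow : (∫ s in x₁..T, (T - s) ^ (α - 1)) = (T - x₁) ^ (α:ℝ) / α := by
    rw [intervalIntegral.integral_comp_sub_left (fun u : ℝ => u ^ (α - 1)) T, sub_self]
    rw [integral_rpow (Or.inl (by linarith : (-1:ℝ) < α - 1))]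
    rw [Real.zero_rpow (by linarith : α - 1 + 1 ≠ 0), sub_add_cancel, sub_zero]
  have hconst : (∫ s in x₁..T, (x₁ + δ) * M * (T - s) ^ (α - 1))
      = (x₁ + δ) * M * ((T - x₁) ^ (α:ℝ) / α) := by
    rw [intervalIntegral.integral_const_mul, hrpow]
  have hbnd : (x₁ + δ) * M * ((T - x₁) ^ (α:ℝ) / α) ≤ M * K / 2 := by
    have hTx₁ : T - x₁ ≤ δ := by linarith [hTmem.2, hx₀lez, hzlt]
    have h1 : (T - x₁) ^ (α:ℝ) ≤ δ ^ (α:ℝ) :=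
      Real.rpow_le_rpow (by linarith [hx₁leT]) hTx₁ hα0.le
    calc (x₁ + δ) * M * ((T - x₁) ^ (α:ℝ) / α)
        ≤ (x₁ + δ) * M * (δ ^ (α:ℝ) / α) := by
          apply mul_le_mul_of_nonneg_left _ (mul_nonneg (by linarith [hx₁pos, hδpos]) hMpos.le)
          exact (div_le_div_iff_of_pos_right hα0).mpr h1
      _ = M * ((x₁ + δ) * δ ^ (α:ℝ)) / α := by ring
      _ ≤ M * (α * K / 2) / α := by
          exact (div_le_div_iff_of_pos_right hα0).mpr (mul_le_mul_of_nonneg_left hδkey hMpos.le)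
      _ = M * K / 2 := by field_simp
  -- final contradiction
  rw [hsplit] at hidx₀
  have hKid : K * Phi α x₀ = K - ((∫ s in (0:ℝ)..T, s * Phi α s * (x₀ - s) ^ (α - 1))
      + ∫ s in T..x₀, s * Phi α s * (x₀ - s) ^ (α - 1)) := by
    rw [hidx₀]
    field_simp
  have hAfin : (∫ s in (0:ℝ)..T, s * Phi α s * (x₀ - s) ^ (α - 1)) ≤ K + M * K / 2 := by
    have := hA
    rw [hDsplit, hD0, zero_add] at this
    linarith [hGT, hD2.trans (hconst.le.trans hbnd)]
  nlinarith [hKpos, hx₀neg, mul_pos hKpos hMpos]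


/-- The integral identity `Φ(x) = 1 − (1/(Γ(α)(1+α))) ∫₀ˣ sΦ(s)(x−s)^{α−1} ds`, together with
`Φ(x) ≥ 0` and `∫₀ˣ sΦ(s)(x−s)^{α−1} ds ≤ Γ(α)(1+α)`. -/
theorem stmt2 (α : ℝ) (hα : α ∈ Set.Ioo (0:ℝ) 1) (x : ℝ) (hx : 0 < x) :
    Phi α x = 1 - (1 / (Real.Gamma α * (1 + α))) *
        ∫ s in (0:ℝ)..x, s * Phi α s * (x - s) ^ (α - 1) ∧
      0 ≤ Phi α x ∧
      (∫ s in (0:ℝ)..x, s * Phi α s * (x - s) ^ (α - 1)) ≤ Real.Gamma α * (1 + α) := by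
  have h1 := Phi_identity hα hx
  have h2 := Phi_nonneg hα hx.le
  refine ⟨h1, h2, ?_⟩
  have hΓ : 0 < Real.Gamma α := Real.Gamma_pos_of_pos hα.1
  have hKpos : 0 < Real.Gamma α * (1 + α) := mul_pos hΓ (by linarith [hα.1] : (0:ℝ) < 1 + α)
  have h3 : 1 / (Real.Gamma α * (1 + α)) *
      (∫ s in (0:ℝ)..x, s * Phi α s * (x - s) ^ (α - 1)) = 1 - Phi α x := by
    linarith [h1]
  calc (∫ s in (0:ℝ)..x, s * Phi α s * (x - s) ^ (α - 1))
      = (Real.Gamma α * (1 + α)) * (1 / (Real.Gamma α * (1 + α)) *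
          ∫ s in (0:ℝ)..x, s * Phi α s * (x - s) ^ (α - 1)) := by
          rw [← mul_assoc, mul_one_div_cancel hKpos.ne', one_mul]
    _ = (Real.Gamma α * (1 + α)) * (1 - Phi α x) := by rw [h3]
    _ ≤ (Real.Gamma α * (1 + α)) * 1 := mul_le_mul_of_nonneg_left (by linarith) hKpos.le
    _ = Real.Gamma α * (1 + α) := mul_one _
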